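/- In the deterministic service model, the value function is antitone in the deadlines: for all r, t ∈ ℕ and finite multisets M, M' of deadlines, if M and M' are related elementwise by ≤ (i.e., there is a pairing of the elements of M with the elements of M' under which each deadline in M is at most its partner in M', Multiset.Rel (· ≤ ·) M M'), then V(r, t, M') ≤ V(r, t, M). -/

import Mathlib

/-- Inconvenience function: `f η t d = η^(t-d+1)` if the deadline `d` is due
(`d ≤ t`), and `0` otherwise. -/
noncomputable def inconvenience (η : ℝ) (t d : ℕ) : ℝ :=
  if d ≤ t then η ^ (t - d + 1) else 0

/-- Value function of the deterministic service model: over `r` remaining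
periods, starting in period `t` with multiset `M` of customer deadlines and
per-period service capacity `m`, the minimal accumulated inconvenience.
`V η m 0 t M = 0` and
`V η m (r+1) t M = min over submultisets A ≤ M with card A ≤ m of
  [∑_{d ∈ M - A} f(t,d) + V η m r (t+1) (M - A)]`. -/
noncomputable def V (η : ℝ) (m : ℕ) : ℕ → ℕ → Multiset ℕ → ℝ
  | 0, _, _ => 0
  | r + 1, t, M =>
      ⨅ A : {A : Multiset ℕ // A ≤ M ∧ Multiset.card A ≤ m},
        (((M - A.1).map (inconvenience η t)).sum + V η m r (t + 1) (M - A.1))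

lemma inconvenience_nonneg {η : ℝ} (hη : 1 < η) (t d : ℕ) :
    0 ≤ inconvenience η t d := by
  unfold inconvenience
  split
  · positivity
  · exact le_refl 0

lemma inconvenience_antitone {η : ℝ} (hη : 1 < η) (t : ℕ) {d d' : ℕ} (h : d ≤ d') :
    inconvenience η t d' ≤ inconvenience η t d := by
  unfold inconvenience
  by_cases h' : d' ≤ t
  · rw [if_pos h', if_pos (h.trans h')]
    exact pow_le_pow_right₀ (le_of_lt hη) (by omega)
  · rw [if_neg h']
    split
    · positivity
    · exact le_refl 0

lemma V_nonneg {η : ℝ} (hη : 1 < η) (m : ℕ) :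
    ∀ (r t : ℕ) (M : Multiset ℕ), 0 ≤ V η m r t M := by
  intro r
  induction r with
  | zero => intro t M; simp [V]
  | succ r ih =>
    intro t M
    rw [V]
    apply Real.iInf_nonneg
    intro A
    have h1 : 0 ≤ ((M - A.1).map (inconvenience η t)).sum := by
      apply Multiset.sum_nonneg
      intro x hx
      obtain ⟨d, _, rfl⟩ := Multiset.mem_map.1 hx
      exact inconvenience_nonneg hη t d
    exact add_nonneg h1 (ih (t + 1) (M - A.1))

/-- Key combinatorial lemma: from a pairing of `M` with `M'` and a
submultiset `A` of `M`, we can select a matching submultiset `A'` of `M'`. -/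
lemma exists_rel_sub {M M' : Multiset ℕ} (h : Multiset.Rel (· ≤ ·) M M') :
    ∀ A ≤ M, ∃ A' ≤ M', Multiset.card A' = Multiset.card A ∧
      Multiset.Rel (· ≤ ·) (M - A) (M' - A') := by
  induction h with
  | zero =>
    intro A hA
    refine ⟨0, le_refl 0, ?_, ?_⟩
    · simp [Multiset.le_zero.1 hA]
    · simp [Multiset.le_zero.1 hA]
  | @cons a b M M' hab hMM' ih =>
    intro A hA
    by_cases hmem : a ∈ A
    · obtain ⟨A'', hA''le, hcard, hrel⟩ := ih (A.erase a)
        (by simpa using Multiset.erase_le_erase a hA)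
      refine ⟨b ::ₘ A'', Multiset.cons_le_cons b hA''le, ?_, ?_⟩
      · have hpos : 0 < Multiset.card A := Multiset.card_pos_iff_exists_mem.2 ⟨a, hmem⟩
        simp only [Multiset.card_cons, hcard, Multiset.card_erase_of_mem hmem, Nat.pred_eq_sub_one]
        omega
      · have hA' : A = a ::ₘ A.erase a := (Multiset.cons_erase hmem).symm
        rw [hA', Multiset.sub_cons, Multiset.sub_cons, Multiset.erase_cons_head,
          Multiset.erase_cons_head]
        exact hrel
    · have hAM : A ≤ M := by
        rw [Multiset.le_iff_count] at hA ⊢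
        intro x
        rcases eq_or_ne x a with rfl | hx
        · simp [Multiset.count_eq_zero_of_notMem hmem]
        · simpa [Multiset.count_cons_of_ne hx] using hA x
      obtain ⟨A', hA'le, hcard, hrel⟩ := ih A hAM
      refine ⟨A', hA'le.trans (Multiset.le_cons_self M' b), hcard, ?_⟩
      rw [Multiset.cons_sub_of_le a hAM, Multiset.cons_sub_of_le b hA'le]
      exact Multiset.Rel.cons hab hrel

/-- The value function is antitone in the deadlines: pointwise later deadlines
(related elementwise via `Multiset.Rel (· ≤ ·)`) yield a value at most as
large (Proposition 1). -/
theorem value_antitone_deadlines (η : ℝ) (hη : 1 < η) (m : ℕ)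
    (r t : ℕ) (M M' : Multiset ℕ) (h : Multiset.Rel (· ≤ ·) M M') :
    V η m r t M' ≤ V η m r t M := by
  induction r generalizing t M M' with
  | zero => simp [V]
  | succ r ih =>
    rw [V, V]
    haveI : Nonempty {A : Multiset ℕ // A ≤ M' ∧ Multiset.card A ≤ m} :=
      ⟨⟨0, (zero_le : (0 : Multiset ℕ) ≤ M'), by simp⟩⟩
    haveI : Nonempty {A : Multiset ℕ // A ≤ M ∧ Multiset.card A ≤ m} :=
      ⟨⟨0, (zero_le : (0 : Multiset ℕ) ≤ M), by simp⟩⟩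
    apply le_ciInf
    rintro ⟨A, hAle, hAcard⟩
    obtain ⟨A', hA'le, hcard, hrel⟩ := exists_rel_sub h A hAle
    have hbdd : BddBelow (Set.range fun A' :
        {A : Multiset ℕ // A ≤ M' ∧ Multiset.card A ≤ m} =>
        ((M' - A'.1).map (inconvenience η t)).sum + V η m r (t + 1) (M' - A'.1)) := by
      refine ⟨0, ?_⟩
      rintro x ⟨B, rfl⟩
      refine add_nonneg (Multiset.sum_nonneg ?_) (V_nonneg hη m r (t + 1) _)
      intro y hy
      obtain ⟨d, _, rfl⟩ := Multiset.mem_map.1 hy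
      exact inconvenience_nonneg hη t d
    refine le_trans (ciInf_le hbdd ⟨A', hA'le, hcard ▸ hAcard⟩) ?_
    apply add_le_add
    · apply Multiset.sum_le_sum_of_rel_le
      rw [Multiset.rel_map]
      exact (Multiset.rel_flip.2 hrel).mono fun a _ b _ hba =>
        inconvenience_antitone hη t hba
    · exact ih (t + 1) _ _ hrel
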